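/- Let (X,d) be a separable metric space, let λ be a locally finite Borel regular measure over X of Vitali type with respect to d, let μ be a locally finite Borel regular measure over X, and let 0 < c < ∞. If the lower derivative satisfies D̲(μ,λ,x) < c for every x in a set A ⊂ X, then μ_λ(A) ≤ c·λ(A); and if the upper derivative satisfies D̄(μ,λ,x) > c for every x ∈ A, then μ_λ(A) ≥ c·λ(A). -/

import Mathlib

open MeasureTheory Metric Filter Set
open scoped ENNReal Topology NNReal

/-- `μ_λ(A) := inf { μ(C) : C Borel, λ(A \ C) = 0 }`. -/
noncomputable def relPart {X : Type*} [MeasurableSpace X]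
    (μ lam : Measure X) (A : Set X) : ℝ≥0∞ :=
  ⨅ (C : Set X) (_ : MeasurableSet C) (_ : lam (A \ C) = 0), μ C

/-- A measure `lam` is of Vitali type with respect to the distance: for every set `A`
and every family `ℬ` of (closed) balls, recorded as pairs (center, radius), such that every
point of `A` is the center of balls of `ℬ` of arbitrarily small radius, there is a countable
disjointed subfamily covering `lam`-almost all of `A`. -/
def IsVitaliType {X : Type*} [MetricSpace X] [MeasurableSpace X] (lam : Measure X) : Prop :=
  ∀ (A : Set X) (ℬ : Set (X × ℝ)),
    (∀ p ∈ ℬ, 0 < p.2) →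
    (∀ x ∈ A, ∀ ε > 0, ∃ r : ℝ, 0 < r ∧ r < ε ∧ (x, r) ∈ ℬ) →
    ∃ F ⊆ ℬ, F.Countable ∧
      (F.PairwiseDisjoint fun p => closedBall p.1 p.2) ∧
      lam (A \ ⋃ p ∈ F, closedBall p.1 p.2) = 0

/-- Lower derivative `D̲(μ,λ,x) = liminf_{r→0⁺} μ(B(x,r))/λ(B(x,r))`
(in `ℝ≥0∞`, with the convention `0/0 = 0`). -/
noncomputable def lowerDeriv {X : Type*} [MetricSpace X] [MeasurableSpace X]
    (μ lam : Measure X) (x : X) : ℝ≥0∞ :=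
  Filter.liminf (fun r : ℝ => μ (closedBall x r) / lam (closedBall x r)) (𝓝[>] (0:ℝ))

/-- Upper derivative `D̄(μ,λ,x) = limsup_{r→0⁺} μ(B(x,r))/λ(B(x,r))`
(in `ℝ≥0∞`, with the convention `0/0 = 0`). -/
noncomputable def upperDeriv {X : Type*} [MetricSpace X] [MeasurableSpace X]
    (μ lam : Measure X) (x : X) : ℝ≥0∞ :=
  Filter.limsup (fun r : ℝ => μ (closedBall x r) / lam (closedBall x r)) (𝓝[>] (0:ℝ))

theorem stmt2 {X : Type*} [MetricSpace X] [TopologicalSpace.SeparableSpace X]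
    [MeasurableSpace X] [BorelSpace X]
    (lam μ : Measure X) [IsLocallyFiniteMeasure lam] [IsLocallyFiniteMeasure μ]
    (hVit : IsVitaliType lam)
    (c : ℝ≥0∞) (hc0 : 0 < c) (hc : c < ∞) (A : Set X) :
    ((∀ x ∈ A, lowerDeriv μ lam x < c) → relPart μ lam A ≤ c * lam A) ∧
    ((∀ x ∈ A, c < upperDeriv μ lam x) → c * lam A ≤ relPart μ lam A) := by
  have : SecondCountableTopology X := UniformSpace.secondCountable_of_separable X
  constructor
  · -- lower derivative part
    intro hlow
    -- reduce to an open superset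
    have key : ∀ U : Set X, IsOpen U → A ⊆ U → relPart μ lam A ≤ c * lam U := by
      intro U hUo hAU
      set ℬ : Set (X × ℝ) := {p | p.1 ∈ A ∧ 0 < p.2 ∧ closedBall p.1 p.2 ⊆ U ∧
        μ (closedBall p.1 p.2) ≤ c * lam (closedBall p.1 p.2)} with hℬ
      have hpos : ∀ p ∈ ℬ, 0 < p.2 := fun p hp => hp.2.1
      have hcent : ∀ x ∈ A, ∀ ε > 0, ∃ r : ℝ, 0 < r ∧ r < ε ∧ (x, r) ∈ ℬ := by
        intro x hx ε hε
        obtain ⟨δ, hδ, hδU⟩ := Metric.nhds_basis_closedBall.mem_iff.mp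
          (hUo.mem_nhds (hAU hx))
        have hfreq : ∃ᶠ r in 𝓝[>] (0:ℝ),
            μ (closedBall x r) / lam (closedBall x r) < c :=
          Filter.frequently_lt_of_liminf_lt (by isBoundedDefault) (hlow x hx)
        have hmem : Ioo (0:ℝ) (min ε δ) ∈ 𝓝[>] (0:ℝ) :=
          Ioo_mem_nhdsGT_of_mem ⟨le_refl 0, lt_min hε hδ⟩
        obtain ⟨r, hrlt, hrIoo⟩ :=
          (hfreq.and_eventually (eventually_of_mem hmem fun y hy => hy)).exists
        refine ⟨r, hrIoo.1, lt_of_lt_of_le hrIoo.2 (min_le_left _ _), hx, hrIoo.1, ?_, ?_⟩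
        · exact (Metric.closedBall_subset_closedBall
            (le_of_lt (lt_of_lt_of_le hrIoo.2 (min_le_right _ _)))).trans hδU
        · exact (ENNReal.div_le_iff_le_mul (Or.inr hc.ne) (Or.inr hc0.ne')).mp hrlt.le
      obtain ⟨F, hFℬ, hFc, hFd, hFcov⟩ := hVit A ℬ hpos hcent
      have hmeas : ∀ p ∈ F, MeasurableSet (closedBall p.1 p.2) := fun p _ =>
        measurableSet_closedBall
      have h1 : relPart μ lam A ≤ μ (⋃ p ∈ F, closedBall p.1 p.2) := by
        refine iInf_le_of_le _ (iInf_le_of_le (MeasurableSet.biUnion hFc hmeas)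
          (iInf_le_of_le hFcov le_rfl))
      refine h1.trans ?_
      calc μ (⋃ p ∈ F, closedBall p.1 p.2)
          ≤ ∑' p : F, μ (closedBall p.1.1 p.1.2) := measure_biUnion_le μ hFc _
        _ ≤ ∑' p : F, c * lam (closedBall p.1.1 p.1.2) :=
            ENNReal.tsum_le_tsum fun p => (hFℬ p.2).2.2.2
        _ = c * ∑' p : F, lam (closedBall p.1.1 p.1.2) := ENNReal.tsum_mul_left
        _ = c * lam (⋃ p ∈ F, closedBall p.1 p.2) := by
            rw [measure_biUnion hFc hFd hmeas]
        _ ≤ c * lam U := by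
            gcongr
            exact iUnion₂_subset fun p hp => (hFℬ hp).2.2.1
    rcases eq_top_or_lt_top (lam A) with hA | hA
    · rw [hA, ENNReal.mul_top hc0.ne']; exact le_top
    · refine ENNReal.le_of_forall_pos_le_add fun ε hε hlt => ?_
      have hεc : (0:ℝ≥0∞) < ε / c := ENNReal.div_pos (by exact_mod_cast hε.ne') hc.ne
      obtain ⟨U, hAU, hUo, hU⟩ := A.exists_isOpen_lt_of_lt (lam A + ε / c)
        (ENNReal.lt_add_right hA.ne hεc.ne')
      calc relPart μ lam A ≤ c * lam U := key U hUo hAU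
        _ ≤ c * (lam A + ε / c) := mul_le_mul_right hU.le c
        _ = c * lam A + c * (ε / c) := by rw [mul_add]
        _ ≤ c * lam A + ε := by gcongr; exact ENNReal.mul_div_le
  · -- upper derivative part
    intro hupp
    refine le_iInf fun C => le_iInf fun hCm => le_iInf fun hCnull => ?_
    rcases eq_top_or_lt_top (μ C) with hμC | hμC
    · rw [hμC]; exact le_top
    refine ENNReal.le_of_forall_pos_le_add fun ε hε _ => ?_
    have hACfin : μ (A ∩ C) < μ C + ε :=
      lt_of_le_of_lt (measure_mono inter_subset_right)
        (ENNReal.lt_add_right hμC.ne (by exact_mod_cast hε.ne'))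
    obtain ⟨U, hAU, hUo, hU⟩ := (A ∩ C).exists_isOpen_lt_of_lt (μ C + ε) hACfin
    set ℬ : Set (X × ℝ) := {p | p.1 ∈ A ∩ C ∧ 0 < p.2 ∧ closedBall p.1 p.2 ⊆ U ∧
      c * lam (closedBall p.1 p.2) ≤ μ (closedBall p.1 p.2)} with hℬ
    have hpos : ∀ p ∈ ℬ, 0 < p.2 := fun p hp => hp.2.1
    have hcent : ∀ x ∈ A ∩ C, ∀ ε' > 0, ∃ r : ℝ, 0 < r ∧ r < ε' ∧ (x, r) ∈ ℬ := by
      intro x hx ε' hε'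
      obtain ⟨δ, hδ, hδU⟩ := Metric.nhds_basis_closedBall.mem_iff.mp
        (hUo.mem_nhds (hAU hx))
      have hfreq : ∃ᶠ r in 𝓝[>] (0:ℝ),
          c < μ (closedBall x r) / lam (closedBall x r) :=
        Filter.frequently_lt_of_lt_limsup (by isBoundedDefault) (hupp x hx.1)
      have hmem : Ioo (0:ℝ) (min ε' δ) ∈ 𝓝[>] (0:ℝ) :=
        Ioo_mem_nhdsGT_of_mem ⟨le_refl 0, lt_min hε' hδ⟩
      obtain ⟨r, hrlt, hrIoo⟩ :=
        (hfreq.and_eventually (eventually_of_mem hmem fun y hy => hy)).exists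
      refine ⟨r, hrIoo.1, lt_of_lt_of_le hrIoo.2 (min_le_left _ _), hx, hrIoo.1, ?_, ?_⟩
      · exact (Metric.closedBall_subset_closedBall
          (le_of_lt (lt_of_lt_of_le hrIoo.2 (min_le_right _ _)))).trans hδU
      · -- from c < μB / λB deduce c * λB ≤ μB
        set b := lam (closedBall x r)
        rcases eq_or_ne b 0 with hb0 | hb0
        · rw [hb0, mul_zero]; exact zero_le
        rcases eq_or_ne b ∞ with hbt | hbt
        · exfalso
          rw [hbt, ENNReal.div_top] at hrlt
          exact (hc0.trans hrlt).false
        · exact (ENNReal.le_div_iff_mul_le (Or.inl hb0) (Or.inl hbt)).mp hrlt.le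
    obtain ⟨F, hFℬ, hFc, hFd, hFcov⟩ := hVit (A ∩ C) ℬ hpos hcent
    have hmeas : ∀ p ∈ F, MeasurableSet (closedBall p.1 p.2) := fun p _ =>
      measurableSet_closedBall
    calc c * lam A ≤ c * lam (A ∩ C) := mul_le_mul_right (by
          calc lam A ≤ lam (A ∩ C) + lam (A \ C) := measure_le_inter_add_diff lam A C
            _ = lam (A ∩ C) := by rw [hCnull, add_zero]) c
      _ ≤ c * lam (⋃ p ∈ F, closedBall p.1 p.2) := mul_le_mul_right (by
          calc lam (A ∩ C)
              ≤ lam (⋃ p ∈ F, closedBall p.1 p.2) +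
                lam ((A ∩ C) \ ⋃ p ∈ F, closedBall p.1 p.2) :=
                measure_le_inter_add_diff lam (A ∩ C) _ |>.trans (by
                  gcongr; exact inter_subset_right)
            _ = lam (⋃ p ∈ F, closedBall p.1 p.2) := by rw [hFcov, add_zero]) c
      _ = c * ∑' p : F, lam (closedBall p.1.1 p.1.2) := by
          rw [measure_biUnion hFc hFd hmeas]
      _ = ∑' p : F, c * lam (closedBall p.1.1 p.1.2) := ENNReal.tsum_mul_left.symm
      _ ≤ ∑' p : F, μ (closedBall p.1.1 p.1.2) :=
          ENNReal.tsum_le_tsum fun p => (hFℬ p.2).2.2.2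
      _ = μ (⋃ p ∈ F, closedBall p.1 p.2) := (measure_biUnion hFc hFd hmeas).symm
      _ ≤ μ U := measure_mono (iUnion₂_subset fun p hp => (hFℬ hp).2.2.1)
      _ ≤ μ C + ε := hU.le
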